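/- Let H be a Hopf algebra over a field k and P = ΣP₁ ⊗ P₂ ∈ H ⊗ H. The following conditions are equivalent: (a) P · (S²⊗id)(Δ(h)) = Δ(h) · P for all h ∈ H, i.e. Σ P₁S²(h₍₁₎) ⊗ P₂h₍₂₎ = Σ h₍₁₎P₁ ⊗ h₍₂₎P₂; (b) (1⊗h) · P = Σ S(h₍₁₎)P₁S²(h₍₂₎) ⊗ P₂h₍₃₎ for all h ∈ H; (c) Σ S(h₍₁₎)P₁S²(h₍₂₎) ⊗ P₂ = Σ P₁ ⊗ h₍₁₎P₂S(h₍₂₎) for all h ∈ H. -/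

import Mathlib

open TensorProduct

noncomputable section

section HopfDefs

variable (k H : Type*) [Field k] [Ring H] [HopfAlgebra k H]

/-- The antipode, abbreviated. -/
def antip : H →ₗ[k] H := HopfAlgebra.antipode (R := k)

/-- The square of the antipode. -/
def antipSq : H →ₗ[k] H := antip k H ∘ₗ antip k H

/-- `sandwich (a ⊗ b)` is the linear endomorphism `x ↦ a * x * b` of `H`. -/
def sandwich : H ⊗[k] H →ₗ[k] Module.End k H :=
  TensorProduct.lift
    (LinearMap.mk₂ k
      (fun a b => LinearMap.mulRight k b ∘ₗ LinearMap.mulLeft k a)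
      (fun a a' b => by ext x; simp [add_mul])
      (fun c a b => by ext x; simp [smul_mul_assoc])
      (fun a b b' => by ext x; simp [mul_add])
      (fun c a b => by ext x; simp [mul_smul_comm]))

/-- `ad* h : x ↦ S(h₍₁₎) x S²(h₍₂₎)` (Sweedler sum understood). -/
def adStar (h : H) : Module.End k H :=
  sandwich k H (TensorProduct.map (antip k H) (antipSq k H) (Coalgebra.comul h))

/-- `ad h : y ↦ h₍₁₎ y S(h₍₂₎)` (Sweedler sum understood). -/
def adAct (h : H) : Module.End k H :=
  sandwich k H (TensorProduct.map LinearMap.id (antip k H) (Coalgebra.comul h))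

/-- For fixed `P = Σ P₁ ⊗ P₂ ∈ H ⊗ H`, the linear map sending
`(a ⊗ b) ⊗ c` to `Σ (a * P₁ * b) ⊗ (P₂ * c)`. -/
def thetaP (P : H ⊗[k] H) : (H ⊗[k] H) ⊗[k] H →ₗ[k] H ⊗[k] H :=
  TensorProduct.lift
    (LinearMap.mk₂ k
      (fun x c => TensorProduct.map (sandwich k H x) (LinearMap.mulRight k c) P)
      (fun x x' c => by
        simp only [map_add, TensorProduct.map_add_left, LinearMap.add_apply])
      (fun r x c => by
        simp only [map_smul, TensorProduct.map_smul_left, LinearMap.smul_apply])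
      (fun x c c' => by
        have h : LinearMap.mulRight k (c + c') =
            LinearMap.mulRight k c + LinearMap.mulRight k c' := by
          ext y; simp [mul_add]
        simp only [h, TensorProduct.map_add_right, LinearMap.add_apply])
      (fun r x c => by
        have h : LinearMap.mulRight k (r • c) = r • LinearMap.mulRight k c := by
          ext y; simp [mul_smul_comm]
        simp only [h, TensorProduct.map_smul_right, LinearMap.smul_apply]))

/-- Condition (a): `P · (S²⊗id)(Δ h) = Δ h · P` for all `h`. -/
def CondA (P : H ⊗[k] H) : Prop :=
  ∀ h : H,
    P * TensorProduct.map (antipSq k H) LinearMap.id (Coalgebra.comul h) =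
      Coalgebra.comul h * P

/-- Condition (b): `(1 ⊗ h) · P = Σ S(h₍₁₎) P₁ S²(h₍₂₎) ⊗ P₂ h₍₃₎` for all `h`. -/
def CondB (P : H ⊗[k] H) : Prop :=
  ∀ h : H,
    (1 ⊗ₜ[k] h) * P =
      thetaP k H P
        (TensorProduct.map (TensorProduct.map (antip k H) (antipSq k H)) LinearMap.id
          (TensorProduct.map Coalgebra.comul LinearMap.id (Coalgebra.comul h)))

/-- Condition (c): `Σ S(h₍₁₎) P₁ S²(h₍₂₎) ⊗ P₂ = Σ P₁ ⊗ h₍₁₎ P₂ S(h₍₂₎)` for all `h`. -/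
def CondC (P : H ⊗[k] H) : Prop :=
  ∀ h : H,
    TensorProduct.map (adStar k H h) LinearMap.id P =
      TensorProduct.map LinearMap.id (adAct k H h) P

end HopfDefs

section Helpers
variable {k H : Type*} [Field k] [Ring H] [HopfAlgebra k H]
open Coalgebra HopfAlgebra

lemma sandwich_tmul (a b x : H) : sandwich k H (a ⊗ₜ[k] b) x = a * x * b := rfl

lemma thetaP_tmul (P : H ⊗[k] H) (x : H ⊗[k] H) (c : H) :
    thetaP k H P (x ⊗ₜ[k] c) =
      TensorProduct.map (sandwich k H x) (LinearMap.mulRight k c) P := rfl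

lemma map_sandwich_mulRight (P : H ⊗[k] H) (a b c : H) :
    TensorProduct.map (sandwich k H (a ⊗ₜ[k] b)) (LinearMap.mulRight k c) P
      = (a ⊗ₜ[k] 1) * P * (b ⊗ₜ[k] c) := by
  induction P using TensorProduct.induction_on with
  | zero => simp
  | tmul p q =>
      simp [sandwich_tmul, Algebra.TensorProduct.tmul_mul_tmul, mul_assoc]
  | add x y hx hy => simp [hx, hy, mul_add, add_mul]

lemma map_sandwich_id (P : H ⊗[k] H) (a b : H) :
    TensorProduct.map (sandwich k H (a ⊗ₜ[k] b)) LinearMap.id P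
      = (a ⊗ₜ[k] 1) * P * (b ⊗ₜ[k] 1) := by
  induction P using TensorProduct.induction_on with
  | zero => simp
  | tmul p q =>
      simp [sandwich_tmul, Algebra.TensorProduct.tmul_mul_tmul, mul_assoc]
  | add x y hx hy => simp [hx, hy, mul_add, add_mul]

lemma map_id_sandwich (P : H ⊗[k] H) (a b : H) :
    TensorProduct.map LinearMap.id (sandwich k H (a ⊗ₜ[k] b)) P
      = (1 ⊗ₜ[k] a) * P * (1 ⊗ₜ[k] b) := by
  induction P using TensorProduct.induction_on with
  | zero => simp
  | tmul p q =>
      simp [sandwich_tmul, Algebra.TensorProduct.tmul_mul_tmul, mul_assoc]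
  | add x y hx hy => simp [hx, hy, mul_add, add_mul]

lemma sum_counit_smul_right {h : H} (r : Coalgebra.Repr k h (H × H)) :
    ∑ i ∈ r.index, Coalgebra.counit (R := k) (r.left i) • r.right i = h := by
  have := congrArg (TensorProduct.lid k H) (Coalgebra.sum_counit_tmul_eq r)
  simpa only [map_sum, TensorProduct.lid_tmul, one_smul] using this

lemma sum_counit_smul_left {h : H} (r : Coalgebra.Repr k h (H × H)) :
    ∑ i ∈ r.index, Coalgebra.counit (R := k) (r.right i) • r.left i = h := by
  have := congrArg (TensorProduct.rid k H) (Coalgebra.sum_tmul_counit_eq r)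
  simpa only [map_sum, TensorProduct.rid_tmul, one_smul] using this

lemma swap3 {M : Type*} [AddCommMonoid M] [Module k M]
    (Θ : H ⊗[k] (H ⊗[k] H) →ₗ[k] M) {h : H} (r : Coalgebra.Repr k h (H × H))
    (rl : ∀ i, Coalgebra.Repr k (r.left i) (H × H)) (rr : ∀ i, Coalgebra.Repr k (r.right i) (H × H)) :
    ∑ i ∈ r.index, ∑ j ∈ (rl i).index,
        Θ ((rl i).left j ⊗ₜ[k] ((rl i).right j ⊗ₜ[k] r.right i))
      = ∑ i ∈ r.index, ∑ j ∈ (rr i).index,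
        Θ (r.left i ⊗ₜ[k] ((rr i).left j ⊗ₜ[k] (rr i).right j)) := by
  have h1 := Coalgebra.sum_tmul_tmul_eq r rl rr
  have h2 := congrArg Θ h1
  simpa [map_sum] using h2


lemma map_sum_left {ι : Type*} (s : Finset ι) (f : ι → (H →ₗ[k] H)) (P : H ⊗[k] H) :
    TensorProduct.map (∑ i ∈ s, f i) LinearMap.id P
      = ∑ i ∈ s, TensorProduct.map (f i) LinearMap.id P := by
  induction P using TensorProduct.induction_on with
  | zero => simp
  | tmul p q => simp [LinearMap.sum_apply, TensorProduct.sum_tmul]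
  | add x y hx hy => simp [hx, hy, Finset.sum_add_distrib]

lemma map_sum_right {ι : Type*} (s : Finset ι) (f : ι → (H →ₗ[k] H)) (P : H ⊗[k] H) :
    TensorProduct.map LinearMap.id (∑ i ∈ s, f i) P
      = ∑ i ∈ s, TensorProduct.map LinearMap.id (f i) P := by
  induction P using TensorProduct.induction_on with
  | zero => simp
  | tmul p q => simp [LinearMap.sum_apply, TensorProduct.tmul_sum]
  | add x y hx hy => simp [hx, hy, Finset.sum_add_distrib]

lemma map_adStar_eq (P : H ⊗[k] H) {h : H} (r : Coalgebra.Repr k h (H × H)) :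
    TensorProduct.map (adStar k H h) LinearMap.id P
      = ∑ i ∈ r.index,
          (antip k H (r.left i) ⊗ₜ[k] 1) * P * (antipSq k H (r.right i) ⊗ₜ[k] 1) := by
  have ha : adStar k H h
      = ∑ i ∈ r.index,
          sandwich k H (antip k H (r.left i) ⊗ₜ[k] antipSq k H (r.right i)) := by
    rw [adStar, ← r.eq, map_sum, map_sum]
    simp [TensorProduct.map_tmul]
  rw [ha, map_sum_left]
  exact Finset.sum_congr rfl fun i _ => map_sandwich_id P _ _

lemma map_adAct_eq (P : H ⊗[k] H) {h : H} (r : Coalgebra.Repr k h (H × H)) :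
    TensorProduct.map LinearMap.id (adAct k H h) P
      = ∑ i ∈ r.index,
          (1 ⊗ₜ[k] r.left i) * P * (1 ⊗ₜ[k] antip k H (r.right i)) := by
  have ha : adAct k H h
      = ∑ i ∈ r.index,
          sandwich k H (r.left i ⊗ₜ[k] antip k H (r.right i)) := by
    rw [adAct, ← r.eq, map_sum, map_sum]
    simp [TensorProduct.map_tmul]
  rw [ha, map_sum_right]
  exact Finset.sum_congr rfl fun i _ => map_id_sandwich P _ _

lemma condB_rhs (P : H ⊗[k] H) {h : H} (r : Coalgebra.Repr k h (H × H))
    (rl : ∀ i, Coalgebra.Repr k (r.left i) (H × H)) :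
    thetaP k H P
        (TensorProduct.map (TensorProduct.map (antip k H) (antipSq k H)) LinearMap.id
          (TensorProduct.map Coalgebra.comul LinearMap.id (Coalgebra.comul h)))
      = ∑ i ∈ r.index, ∑ j ∈ (rl i).index,
          (antip k H ((rl i).left j) ⊗ₜ[k] 1) * P
            * (antipSq k H ((rl i).right j) ⊗ₜ[k] r.right i) := by
  rw [← r.eq, map_sum, map_sum, map_sum]
  refine Finset.sum_congr rfl fun i _ => ?_
  rw [TensorProduct.map_tmul, LinearMap.id_apply, ← (rl i).eq, TensorProduct.sum_tmul,
    map_sum, map_sum]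
  refine Finset.sum_congr rfl fun j _ => ?_
  rw [TensorProduct.map_tmul, TensorProduct.map_tmul, LinearMap.id_apply, thetaP_tmul,
    map_sandwich_mulRight]

lemma condB_rhs' (P : H ⊗[k] H) {h : H} (r : Coalgebra.Repr k h (H × H))
    (rl : ∀ i, Coalgebra.Repr k (r.left i) (H × H)) :
    thetaP k H P
        (TensorProduct.map (TensorProduct.map (antip k H) (antipSq k H)) LinearMap.id
          (TensorProduct.map Coalgebra.comul LinearMap.id (Coalgebra.comul h)))
      = ∑ i ∈ r.index,
          (TensorProduct.map (adStar k H (r.left i)) LinearMap.id P) * (1 ⊗ₜ[k] r.right i) := by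
  rw [condB_rhs P r rl]
  refine Finset.sum_congr rfl fun i _ => ?_
  rw [map_adStar_eq P (rl i), Finset.sum_mul]
  refine Finset.sum_congr rfl fun j _ => ?_
  rw [mul_assoc, mul_assoc, Algebra.TensorProduct.tmul_mul_tmul, mul_one, one_mul]
  exact (mul_assoc _ _ _).symm

end Helpers

section Defs2
variable (k H : Type*) [Field k] [Ring H] [HopfAlgebra k H]

/-- `x ↦ x ⊗ 1`. -/
def tensR : H →ₗ[k] H ⊗[k] H := (TensorProduct.mk k H H).flip 1

/-- `x ↦ 1 ⊗ x`. -/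
def tensL : H →ₗ[k] H ⊗[k] H := TensorProduct.mk k H H 1

@[simp] lemma tensR_apply (x : H) : tensR k H x = x ⊗ₜ[k] (1 : H) := rfl
@[simp] lemma tensL_apply (x : H) : tensL k H x = (1 : H) ⊗ₜ[k] x := rfl

/-- bilinear map `x ⊗ w ↦ A x * B w`. -/
def bl (A : H →ₗ[k] H ⊗[k] H) (B : H ⊗[k] H →ₗ[k] H ⊗[k] H) :
    H ⊗[k] (H ⊗[k] H) →ₗ[k] H ⊗[k] H :=
  TensorProduct.lift (LinearMap.mk₂ k (fun x w => A x * B w)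
    (fun x x' w => by simp [add_mul]) (fun c x w => by simp [smul_mul_assoc])
    (fun x w w' => by simp [mul_add]) (fun c x w => by simp [mul_smul_comm]))

@[simp] lemma bl_tmul (A : H →ₗ[k] H ⊗[k] H) (B : H ⊗[k] H →ₗ[k] H ⊗[k] H)
    (x : H) (w : H ⊗[k] H) : bl k H A B (x ⊗ₜ[k] w) = A x * B w := rfl

/-- `x ↦ (adStar x ⊗ id) P`, as a linear map in `x`. -/
def adStarMapP (P : H ⊗[k] H) : H →ₗ[k] H ⊗[k] H :=
  LinearMap.applyₗ P ∘ₗ LinearMap.rTensorHom H ∘ₗ sandwich k H ∘ₗ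
    TensorProduct.map (antip k H) (antipSq k H) ∘ₗ Coalgebra.comul

@[simp] lemma adStarMapP_apply (P : H ⊗[k] H) (x : H) :
    adStarMapP k H P x = TensorProduct.map (adStar k H x) LinearMap.id P := rfl


/-- `z ↦ P * (S² ⊗ id)(Δ z)`. -/
def qMap (P : H ⊗[k] H) : H →ₗ[k] H ⊗[k] H :=
  LinearMap.mulLeft k P ∘ₗ TensorProduct.map (antipSq k H) LinearMap.id ∘ₗ Coalgebra.comul

@[simp] lemma qMap_apply (P : H ⊗[k] H) (z : H) :
    qMap k H P z = P * TensorProduct.map (antipSq k H) LinearMap.id (Coalgebra.comul z) := rfl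

end Defs2
section Implications
variable {k H : Type*} [Field k] [Ring H] [HopfAlgebra k H]
open Coalgebra HopfAlgebra

lemma antip_eq : antip k H = HopfAlgebra.antipode (R := k) := rfl

lemma claim1 {h : H} (r : Coalgebra.Repr k h (H × H))
    (rl : ∀ i, Coalgebra.Repr k (r.left i) (H × H)) (rr : ∀ i, Coalgebra.Repr k (r.right i) (H × H)) :
    ∑ i ∈ r.index, (antip k H (r.left i) ⊗ₜ[k] (1 : H)) * Coalgebra.comul (r.right i)
      = (1 : H) ⊗ₜ[k] h := by
  calc
    ∑ i ∈ r.index, (antip k H (r.left i) ⊗ₜ[k] (1 : H)) * Coalgebra.comul (r.right i)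
        = ∑ i ∈ r.index, ∑ j ∈ (rr i).index,
            bl k H (tensR k H ∘ₗ antip k H) LinearMap.id
              (r.left i ⊗ₜ[k] ((rr i).left j ⊗ₜ[k] (rr i).right j)) := by
          refine Finset.sum_congr rfl fun i _ => ?_
          rw [← (rr i).eq, Finset.mul_sum]
          simp
    _ = ∑ i ∈ r.index, ∑ j ∈ (rl i).index,
            bl k H (tensR k H ∘ₗ antip k H) LinearMap.id
              ((rl i).left j ⊗ₜ[k] ((rl i).right j ⊗ₜ[k] r.right i)) :=
          (swap3 _ r rl rr).symm
    _ = ∑ i ∈ r.index,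
          (∑ j ∈ (rl i).index, antip k H ((rl i).left j) * (rl i).right j) ⊗ₜ[k] r.right i := by
          refine Finset.sum_congr rfl fun i _ => ?_
          rw [TensorProduct.sum_tmul]
          refine Finset.sum_congr rfl fun j _ => ?_
          simp [Algebra.TensorProduct.tmul_mul_tmul]
    _ = ∑ i ∈ r.index,
          (Coalgebra.counit (R := k) (r.left i) • (1 : H)) ⊗ₜ[k] r.right i := by
          refine Finset.sum_congr rfl fun i _ => ?_
          rw [antip_eq, HopfAlgebra.sum_antipode_mul_eq_smul (rl i)]
    _ = ∑ i ∈ r.index, (1 : H) ⊗ₜ[k] (Coalgebra.counit (R := k) (r.left i) • r.right i) :=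
          Finset.sum_congr rfl fun i _ => TensorProduct.smul_tmul _ _ _
    _ = (1 : H) ⊗ₜ[k] ∑ i ∈ r.index, Coalgebra.counit (R := k) (r.left i) • r.right i :=
          (TensorProduct.tmul_sum _ _ _).symm
    _ = (1 : H) ⊗ₜ[k] h := by rw [sum_counit_smul_right r]

lemma AtoB (P : H ⊗[k] H) (hA : CondA k H P) : CondB k H P := by
  intro h
  have r := Coalgebra.Repr.arbitrary k h
  have rl := fun i => Coalgebra.Repr.arbitrary k (r.left i)
  have rr := fun i => Coalgebra.Repr.arbitrary k (r.right i)
  rw [condB_rhs P r rl]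
  refine Eq.symm ?_
  calc
    ∑ i ∈ r.index, ∑ j ∈ (rl i).index,
        (antip k H ((rl i).left j) ⊗ₜ[k] 1) * P
          * (antipSq k H ((rl i).right j) ⊗ₜ[k] r.right i)
        = ∑ i ∈ r.index, ∑ j ∈ (rl i).index,
            bl k H (LinearMap.mulRight k P ∘ₗ tensR k H ∘ₗ antip k H)
              (TensorProduct.map (antipSq k H) LinearMap.id)
              ((rl i).left j ⊗ₜ[k] ((rl i).right j ⊗ₜ[k] r.right i)) := by
          refine Finset.sum_congr rfl fun i _ => Finset.sum_congr rfl fun j _ => ?_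
          simp
    _ = ∑ i ∈ r.index, ∑ j ∈ (rr i).index,
            bl k H (LinearMap.mulRight k P ∘ₗ tensR k H ∘ₗ antip k H)
              (TensorProduct.map (antipSq k H) LinearMap.id)
              (r.left i ⊗ₜ[k] ((rr i).left j ⊗ₜ[k] (rr i).right j)) :=
          swap3 _ r rl rr
    _ = ∑ i ∈ r.index,
          (antip k H (r.left i) ⊗ₜ[k] (1 : H)) *
            (P * TensorProduct.map (antipSq k H) LinearMap.id
                  (Coalgebra.comul (r.right i))) := by
          refine Finset.sum_congr rfl fun i _ => ?_
          rw [← (rr i).eq, map_sum, Finset.mul_sum, Finset.mul_sum]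
          refine Finset.sum_congr rfl fun j _ => ?_
          simp [mul_assoc]
    _ = ∑ i ∈ r.index,
          (antip k H (r.left i) ⊗ₜ[k] (1 : H)) * (Coalgebra.comul (r.right i) * P) := by
          refine Finset.sum_congr rfl fun i _ => ?_
          rw [hA (r.right i)]
    _ = (∑ i ∈ r.index,
          (antip k H (r.left i) ⊗ₜ[k] (1 : H)) * Coalgebra.comul (r.right i)) * P := by
          rw [Finset.sum_mul]
          exact Finset.sum_congr rfl fun i _ => (mul_assoc _ _ _).symm
    _ = ((1 : H) ⊗ₜ[k] h) * P := by rw [claim1 r rl rr]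

lemma BtoA (P : H ⊗[k] H) (hB : CondB k H P) : CondA k H P := by
  intro h
  have r := Coalgebra.Repr.arbitrary k h
  have rl := fun i => Coalgebra.Repr.arbitrary k (r.left i)
  have rr := fun i => Coalgebra.Repr.arbitrary k (r.right i)
  have rrl := fun i j => Coalgebra.Repr.arbitrary k ((rr i).left j)
  have rrr := fun i j => Coalgebra.Repr.arbitrary k ((rr i).right j)
  refine Eq.symm ?_
  have hQ : ∀ z, P * TensorProduct.map (antipSq k H) LinearMap.id (Coalgebra.comul z)
      = qMap k H P z := fun z => rfl
  rw [hQ h]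
  calc
    Coalgebra.comul h * P
        = ∑ i ∈ r.index, (r.left i ⊗ₜ[k] r.right i) * P := by
          rw [← r.eq, Finset.sum_mul]
    _ = ∑ i ∈ r.index, (r.left i ⊗ₜ[k] (1 : H)) * (((1 : H) ⊗ₜ[k] r.right i) * P) := by
          refine Finset.sum_congr rfl fun i _ => ?_
          rw [← mul_assoc, Algebra.TensorProduct.tmul_mul_tmul, mul_one, one_mul]
    _ = ∑ i ∈ r.index, (r.left i ⊗ₜ[k] (1 : H)) *
          (∑ j ∈ (rr i).index, ∑ l ∈ (rrl i j).index,
            (antip k H ((rrl i j).left l) ⊗ₜ[k] 1) * P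
              * (antipSq k H ((rrl i j).right l) ⊗ₜ[k] (rr i).right j)) := by
          refine Finset.sum_congr rfl fun i _ => ?_
          rw [hB (r.right i), condB_rhs P (rr i) (rrl i)]
    _ = ∑ i ∈ r.index, ∑ j ∈ (rr i).index, ∑ l ∈ (rrl i j).index,
          (LinearMap.mulLeft k (r.left i ⊗ₜ[k] (1 : H)) ∘ₗ
            bl k H (LinearMap.mulRight k P ∘ₗ tensR k H ∘ₗ antip k H)
              (TensorProduct.map (antipSq k H) LinearMap.id))
            ((rrl i j).left l ⊗ₜ[k] ((rrl i j).right l ⊗ₜ[k] (rr i).right j)) := by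
          refine Finset.sum_congr rfl fun i _ => ?_
          rw [Finset.mul_sum]
          refine Finset.sum_congr rfl fun j _ => ?_
          rw [Finset.mul_sum]
          refine Finset.sum_congr rfl fun l _ => ?_
          simp
    _ = ∑ i ∈ r.index, ∑ j ∈ (rr i).index, ∑ m ∈ (rrr i j).index,
          (LinearMap.mulLeft k (r.left i ⊗ₜ[k] (1 : H)) ∘ₗ
            bl k H (LinearMap.mulRight k P ∘ₗ tensR k H ∘ₗ antip k H)
              (TensorProduct.map (antipSq k H) LinearMap.id))
            ((rr i).left j ⊗ₜ[k] ((rrr i j).left m ⊗ₜ[k] (rrr i j).right m)) := by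
          exact Finset.sum_congr rfl fun i _ => swap3 _ (rr i) (rrl i) (rrr i)
    _ = ∑ i ∈ r.index, ∑ j ∈ (rr i).index,
          bl k H (tensR k H)
            (LinearMap.mul' k (H ⊗[k] H) ∘ₗ
              TensorProduct.map (tensR k H ∘ₗ antip k H) (qMap k H P))
            (r.left i ⊗ₜ[k] ((rr i).left j ⊗ₜ[k] (rr i).right j)) := by
          refine Finset.sum_congr rfl fun i _ => Finset.sum_congr rfl fun j _ => ?_
          have hq : qMap k H P ((rr i).right j)
              = ∑ m ∈ (rrr i j).index,
                  P * (antipSq k H ((rrr i j).left m) ⊗ₜ[k] (rrr i j).right m) := by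
            rw [qMap_apply, ← (rrr i j).eq, map_sum, Finset.mul_sum]
            exact Finset.sum_congr rfl fun m _ => by simp
          rw [bl_tmul]
          simp only [LinearMap.coe_comp, Function.comp_apply, TensorProduct.map_tmul,
            LinearMap.mul'_apply, tensR_apply]
          rw [hq, Finset.mul_sum, Finset.mul_sum]
          refine Finset.sum_congr rfl fun m _ => ?_
          simp [mul_assoc]
    _ = ∑ i ∈ r.index, ∑ j ∈ (rl i).index,
          bl k H (tensR k H)
            (LinearMap.mul' k (H ⊗[k] H) ∘ₗ
              TensorProduct.map (tensR k H ∘ₗ antip k H) (qMap k H P))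
            ((rl i).left j ⊗ₜ[k] ((rl i).right j ⊗ₜ[k] r.right i)) :=
          (Finset.sum_congr rfl fun i _ => rfl).trans (swap3 _ r rl rr).symm
    _ = ∑ i ∈ r.index,
          ((∑ j ∈ (rl i).index, (rl i).left j * antip k H ((rl i).right j)) ⊗ₜ[k] (1 : H))
            * qMap k H P (r.right i) := by
          refine Finset.sum_congr rfl fun i _ => ?_
          rw [TensorProduct.sum_tmul, Finset.sum_mul]
          refine Finset.sum_congr rfl fun j _ => ?_
          have h2 : ((rl i).left j * antip k H ((rl i).right j)) ⊗ₜ[k] (1 : H)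
              = ((rl i).left j ⊗ₜ[k] (1 : H)) * (antip k H ((rl i).right j) ⊗ₜ[k] (1 : H)) := by
            simp [Algebra.TensorProduct.tmul_mul_tmul]
          rw [h2, mul_assoc]
          simp
    _ = ∑ i ∈ r.index, Coalgebra.counit (R := k) (r.left i) • qMap k H P (r.right i) := by
          refine Finset.sum_congr rfl fun i _ => ?_
          rw [antip_eq, HopfAlgebra.sum_mul_antipode_eq_smul (rl i),
            ← TensorProduct.smul_tmul', ← Algebra.TensorProduct.one_def, smul_mul_assoc,
            one_mul]
    _ = qMap k H P h := by
          conv_rhs => rw [← sum_counit_smul_right (k := k) r]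
          rw [map_sum]
          exact Finset.sum_congr rfl fun i _ => (map_smul _ _ _).symm

lemma CtoB (P : H ⊗[k] H) (hC : CondC k H P) : CondB k H P := by
  intro h
  have r := Coalgebra.Repr.arbitrary k h
  have rl := fun i => Coalgebra.Repr.arbitrary k (r.left i)
  have rr := fun i => Coalgebra.Repr.arbitrary k (r.right i)
  rw [condB_rhs' P r rl]
  refine Eq.symm ?_
  calc
    ∑ i ∈ r.index,
        (TensorProduct.map (adStar k H (r.left i)) LinearMap.id P) * ((1 : H) ⊗ₜ[k] r.right i)
        = ∑ i ∈ r.index,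
            (TensorProduct.map LinearMap.id (adAct k H (r.left i)) P)
              * ((1 : H) ⊗ₜ[k] r.right i) := by
          refine Finset.sum_congr rfl fun i _ => ?_
          rw [hC (r.left i)]
    _ = ∑ i ∈ r.index, ∑ j ∈ (rl i).index,
          ((1 : H) ⊗ₜ[k] (rl i).left j) * P * ((1 : H) ⊗ₜ[k] antip k H ((rl i).right j))
            * ((1 : H) ⊗ₜ[k] r.right i) := by
          refine Finset.sum_congr rfl fun i _ => ?_
          rw [map_adAct_eq P (rl i), Finset.sum_mul]
    _ = ∑ i ∈ r.index, ∑ j ∈ (rl i).index,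
          bl k H (LinearMap.mulRight k P ∘ₗ tensL k H)
            (tensL k H ∘ₗ LinearMap.mul' k H ∘ₗ (antip k H).rTensor H)
            ((rl i).left j ⊗ₜ[k] ((rl i).right j ⊗ₜ[k] r.right i)) := by
          refine Finset.sum_congr rfl fun i _ => Finset.sum_congr rfl fun j _ => ?_
          rw [mul_assoc, mul_assoc, Algebra.TensorProduct.tmul_mul_tmul, one_mul]
          simp [mul_assoc]
    _ = ∑ i ∈ r.index, ∑ j ∈ (rr i).index,
          bl k H (LinearMap.mulRight k P ∘ₗ tensL k H)
            (tensL k H ∘ₗ LinearMap.mul' k H ∘ₗ (antip k H).rTensor H)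
            (r.left i ⊗ₜ[k] ((rr i).left j ⊗ₜ[k] (rr i).right j)) :=
          swap3 _ r rl rr
    _ = ∑ i ∈ r.index,
          (((1 : H) ⊗ₜ[k] r.left i) * P)
            * ((1 : H) ⊗ₜ[k] (Coalgebra.counit (R := k) (r.right i) • (1 : H))) := by
          refine Finset.sum_congr rfl fun i _ => ?_
          have : ∑ j ∈ (rr i).index,
              bl k H (LinearMap.mulRight k P ∘ₗ tensL k H)
                (tensL k H ∘ₗ LinearMap.mul' k H ∘ₗ (antip k H).rTensor H)
                (r.left i ⊗ₜ[k] ((rr i).left j ⊗ₜ[k] (rr i).right j))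
              = ∑ j ∈ (rr i).index,
                  (((1 : H) ⊗ₜ[k] r.left i) * P)
                    * ((1 : H) ⊗ₜ[k] (antip k H ((rr i).left j) * (rr i).right j)) :=
            Finset.sum_congr rfl fun j _ => by simp
          rw [this, ← Finset.mul_sum, ← TensorProduct.tmul_sum, antip_eq,
            HopfAlgebra.sum_antipode_mul_eq_smul (rr i)]
    _ = ∑ i ∈ r.index,
          Coalgebra.counit (R := k) (r.right i) • (((1 : H) ⊗ₜ[k] r.left i) * P) := by
          refine Finset.sum_congr rfl fun i _ => ?_
          rw [TensorProduct.tmul_smul, ← Algebra.TensorProduct.one_def, mul_smul_comm, mul_one]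
    _ = (∑ i ∈ r.index,
          Coalgebra.counit (R := k) (r.right i) • ((1 : H) ⊗ₜ[k] r.left i)) * P := by
          rw [Finset.sum_mul]
          exact Finset.sum_congr rfl fun i _ => (smul_mul_assoc _ _ _).symm
    _ = ((1 : H) ⊗ₜ[k] h) * P := by
          congr 1
          calc ∑ i ∈ r.index, Coalgebra.counit (R := k) (r.right i) • ((1 : H) ⊗ₜ[k] r.left i)
              = ∑ i ∈ r.index,
                  (1 : H) ⊗ₜ[k] (Coalgebra.counit (R := k) (r.right i) • r.left i) :=
                Finset.sum_congr rfl fun i _ => (TensorProduct.tmul_smul _ _ _).symm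
            _ = (1 : H) ⊗ₜ[k] ∑ i ∈ r.index,
                  Coalgebra.counit (R := k) (r.right i) • r.left i :=
                (TensorProduct.tmul_sum _ _ _).symm
            _ = (1 : H) ⊗ₜ[k] h := by rw [sum_counit_smul_left r]

lemma BtoC (P : H ⊗[k] H) (hB : CondB k H P) : CondC k H P := by
  intro h
  have r := Coalgebra.Repr.arbitrary k h
  have rl := fun i => Coalgebra.Repr.arbitrary k (r.left i)
  have rr := fun i => Coalgebra.Repr.arbitrary k (r.right i)
  have rll := fun i j => Coalgebra.Repr.arbitrary k ((rl i).left j)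
  refine Eq.symm ?_
  calc
    TensorProduct.map LinearMap.id (adAct k H h) P
        = ∑ i ∈ r.index,
            ((1 : H) ⊗ₜ[k] r.left i) * P * ((1 : H) ⊗ₜ[k] antip k H (r.right i)) :=
          map_adAct_eq P r
    _ = ∑ i ∈ r.index, ∑ j ∈ (rl i).index,
          (TensorProduct.map (adStar k H ((rl i).left j)) LinearMap.id P)
            * ((1 : H) ⊗ₜ[k] (rl i).right j) * ((1 : H) ⊗ₜ[k] antip k H (r.right i)) := by
          refine Finset.sum_congr rfl fun i _ => ?_
          rw [hB (r.left i), condB_rhs' P (rl i) (rll i), Finset.sum_mul]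
    _ = ∑ i ∈ r.index, ∑ j ∈ (rl i).index,
          bl k H (adStarMapP k H P)
            (tensL k H ∘ₗ LinearMap.mul' k H ∘ₗ (antip k H).lTensor H)
            ((rl i).left j ⊗ₜ[k] ((rl i).right j ⊗ₜ[k] r.right i)) := by
          refine Finset.sum_congr rfl fun i _ => Finset.sum_congr rfl fun j _ => ?_
          rw [mul_assoc, Algebra.TensorProduct.tmul_mul_tmul, one_mul]
          simp
    _ = ∑ i ∈ r.index, ∑ j ∈ (rr i).index,
          bl k H (adStarMapP k H P)
            (tensL k H ∘ₗ LinearMap.mul' k H ∘ₗ (antip k H).lTensor H)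
            (r.left i ⊗ₜ[k] ((rr i).left j ⊗ₜ[k] (rr i).right j)) :=
          swap3 _ r rl rr
    _ = ∑ i ∈ r.index,
          (TensorProduct.map (adStar k H (r.left i)) LinearMap.id P)
            * ((1 : H) ⊗ₜ[k] (Coalgebra.counit (R := k) (r.right i) • (1 : H))) := by
          refine Finset.sum_congr rfl fun i _ => ?_
          have : ∑ j ∈ (rr i).index,
              bl k H (adStarMapP k H P)
                (tensL k H ∘ₗ LinearMap.mul' k H ∘ₗ (antip k H).lTensor H)
                (r.left i ⊗ₜ[k] ((rr i).left j ⊗ₜ[k] (rr i).right j))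
              = ∑ j ∈ (rr i).index,
                  (TensorProduct.map (adStar k H (r.left i)) LinearMap.id P)
                    * ((1 : H) ⊗ₜ[k] ((rr i).left j * antip k H ((rr i).right j))) :=
            Finset.sum_congr rfl fun j _ => by simp
          rw [this, ← Finset.mul_sum, ← TensorProduct.tmul_sum, antip_eq,
            HopfAlgebra.sum_mul_antipode_eq_smul (rr i)]
    _ = ∑ i ∈ r.index,
          Coalgebra.counit (R := k) (r.right i)
            • (TensorProduct.map (adStar k H (r.left i)) LinearMap.id P) := by
          refine Finset.sum_congr rfl fun i _ => ?_
          rw [TensorProduct.tmul_smul, ← Algebra.TensorProduct.one_def, mul_smul_comm, mul_one]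
    _ = TensorProduct.map (adStar k H h) LinearMap.id P := by
          calc ∑ i ∈ r.index, Coalgebra.counit (R := k) (r.right i)
                • (TensorProduct.map (adStar k H (r.left i)) LinearMap.id P)
              = ∑ i ∈ r.index,
                  adStarMapP k H P (Coalgebra.counit (R := k) (r.right i) • r.left i) := by
                refine Finset.sum_congr rfl fun i _ => ?_
                rw [map_smul, adStarMapP_apply]
            _ = adStarMapP k H P (∑ i ∈ r.index,
                  Coalgebra.counit (R := k) (r.right i) • r.left i) := (map_sum _ _ _).symm
            _ = adStarMapP k H P h := by rw [sum_counit_smul_left r]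

end Implications

theorem stmt12 (k H : Type*) [Field k] [Ring H] [HopfAlgebra k H] (P : H ⊗[k] H) :
    (CondA k H P ↔ CondB k H P) ∧ (CondB k H P ↔ CondC k H P) := by
  exact ⟨⟨fun hA => AtoB P hA, fun hB => BtoA P hB⟩,
    ⟨fun hB => BtoC P hB, fun hC => CtoB P hC⟩⟩
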